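/- arXiv:1709.05045 — 4 statements merged into one kernel-verified Lean document; each statement's English description precedes it below -/
import Mathlib

section
/- Soundness of one-step unfolding (abstract Step rule): let (S, →) be a transition system and T a set of terminal states. Suppose (i) every state in A \ B has at least one successor (in particular A \ B is disjoint from T), and (ii) for every a ∈ A \ B and every successor a' of a (i.e., a → a'), the relation {a'} →⊛ B holds relative to T. Then A →⊛ B holds relative to T. -/
/-- A finite path p 0 → p 1 → ⋯ → p n in a transition system. -/
def IsPath {S : Type*} (r : S → S → Prop) (p : ℕ → S) (n : ℕ) : Prop :=
  ∀ k < n, r (p k) (p (k + 1))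

/-- `A →⊛ B` holds relative to `T`: every finite path starting in `A` and
ending in `T` passes through a state of `B`. -/
def RLHolds {S : Type*} (r : S → S → Prop) (T A B : Set S) : Prop :=
  ∀ (p : ℕ → S) (n : ℕ), IsPath r p n → p 0 ∈ A → p n ∈ T → ∃ k ≤ n, p k ∈ B

/-- A state is terminal iff it has no outgoing transition. -/
def Terminal {S : Type*} (r : S → S → Prop) (s : S) : Prop := ¬ ∃ t, r s t

theorem stmt_5 {S : Type*} (r : S → S → Prop) (T A B : Set S)
    (hT : ∀ t ∈ T, Terminal r t)
    (hsucc : ∀ a ∈ A \ B, ∃ a', r a a')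
    (hstep : ∀ a ∈ A \ B, ∀ a', r a a' → RLHolds r T {a'} B) :
    RLHolds r T A B := by
  intro p n hp h0 hn
  by_cases hB : p 0 ∈ B
  · exact ⟨0, Nat.zero_le n, hB⟩
  have hAB : p 0 ∈ A \ B := ⟨h0, hB⟩
  cases n with
  | zero =>
    exact absurd (hsucc _ hAB) (hT _ hn)
  | succ m =>
    have hr : r (p 0) (p 1) := hp 0 (Nat.succ_pos m)
    have := hstep _ hAB _ hr (fun k => p (k + 1)) m
      (fun k hk => hp (k + 1) (Nat.succ_lt_succ hk)) rfl hn
    obtain ⟨k, hk, hkB⟩ := this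
    exact ⟨k + 1, Nat.succ_le_succ hk, hkB⟩
end

section
/- Solution of the invariant paradox (abstract stop-transformation): let (S, →) be a transition system, S₀, P ⊆ S. Define a new transition system on S' = S ⊕ S (two disjoint copies of S, written s for the first copy and [s] for the second) with transitions s →' t whenever s → t, together with s →' [s] for every s ∈ S, and no transitions out of second-copy states. Let T' = { [s] | s ∈ S } and [P] = { [p] | p ∈ P }. Then Reach(S₀) ⊆ P in (S, →) if and only if S₀ →⊛ [P] holds in (S', →') relative to T'. -/
/-- The set of states reachable from `S₀`. -/
def Reach {S : Type*} (r : S → S → Prop) (S₀ : Set S) : Set S :=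
  {s | ∃ s₀ ∈ S₀, Relation.ReflTransGen r s₀ s}

/-- The stop-transformed transition relation on two disjoint copies of `S`:
first-copy transitions mimic `r`, each first-copy state may stop into its
second copy, and second-copy states are terminal. -/
def stepStop {S : Type*} (r : S → S → Prop) : S ⊕ S → S ⊕ S → Prop
  | Sum.inl s, Sum.inl t => r s t
  | Sum.inl s, Sum.inr t => s = t
  | Sum.inr _, _ => False

theorem stmt_10 {S : Type*} (r : S → S → Prop) (S₀ P : Set S) :
    Reach r S₀ ⊆ P ↔
      RLHolds (stepStop r) (Set.range Sum.inr) (Sum.inl '' S₀) (Sum.inr '' P) := by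
  have reach_path : ∀ {a b : S}, Relation.ReflTransGen r a b →
      ∃ n p, IsPath r p n ∧ p 0 = a ∧ p n = b := by
    intro a b h
    induction h with
    | refl => exact ⟨0, fun _ => a, fun k hk => absurd hk (Nat.not_lt_zero k), rfl, rfl⟩
    | @tail b c _ hbc ih =>
      obtain ⟨n, p, hp, h0, hn⟩ := ih
      refine ⟨n + 1, fun k => if k ≤ n then p k else c, ?_, by simp [h0], by
        simp [Nat.not_succ_le_self]⟩
      intro k hk
      rcases lt_or_ge k n with hkn | hkn
      · simpa [hkn.le, Nat.succ_le_of_lt hkn] using hp k hkn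
      · have hkeq : k = n := by omega
        subst hkeq
        simpa [Nat.not_succ_le_self, hn] using hbc
  constructor
  · intro hRP p n hp h0 hn
    classical
    obtain ⟨s0, hs0, h0eq⟩ := h0
    have hex : ∃ m, ∃ t, p m = Sum.inr t := by
      obtain ⟨t, ht⟩ := hn; exact ⟨n, t, ht.symm⟩
    set m := Nat.find hex with hmdef
    obtain ⟨t, ht⟩ := Nat.find_spec hex
    rw [← hmdef] at ht
    have hmn : m ≤ n := by
      obtain ⟨t', ht'⟩ := hn
      exact Nat.find_min' hex ⟨t', ht'.symm⟩
    have key : ∀ k, k < m → ∃ u, p k = Sum.inl u ∧ u ∈ Reach r S₀ := by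
      intro k
      induction k with
      | zero => exact fun _ => ⟨s0, h0eq.symm, s0, hs0, Relation.ReflTransGen.refl⟩
      | succ k ih =>
        intro hk
        obtain ⟨u, hu, hur⟩ := ih (Nat.lt_of_succ_lt hk)
        have hstep := hp k (by omega)
        cases hpk1 : p (k + 1) with
        | inl v =>
          rw [hu, hpk1] at hstep
          obtain ⟨s0', hs0', hr⟩ := hur
          exact ⟨v, rfl, s0', hs0', hr.tail hstep⟩
        | inr v => exact absurd ⟨v, hpk1⟩ (Nat.find_min hex hk)
    have hm0 : m ≠ 0 := by
      intro h
      rw [h, ← h0eq] at ht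
      exact Sum.inl_ne_inr ht
    obtain ⟨u, hu, hur⟩ := key (m - 1) (by omega)
    have hstep := hp (m - 1) (by omega)
    have hsucc : m - 1 + 1 = m := by omega
    rw [hu, hsucc, ht] at hstep
    have hut : u = t := hstep
    refine ⟨m, hmn, t, hRP ?_, ht.symm⟩
    rwa [hut] at hur
  · intro hRL s hs
    obtain ⟨s0, hs0, hr⟩ := hs
    obtain ⟨n, q, hq, h0, hn⟩ := reach_path hr
    set p : ℕ → S ⊕ S := fun k => if k ≤ n then Sum.inl (q k) else Sum.inr s with hpdef
    have hpath : IsPath (stepStop r) p (n + 1) := by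
      intro k hk
      rcases lt_or_ge k n with hkn | hkn
      · simpa [hpdef, hkn.le, Nat.succ_le_of_lt hkn, stepStop] using hq k hkn
      · have hkeq : k = n := by omega
        subst hkeq
        simpa [hpdef, Nat.not_succ_le_self, stepStop] using hn
    obtain ⟨k, hk, hkP⟩ := hRL p (n + 1) hpath
      (by exact ⟨s0, hs0, by simp [hpdef, h0]⟩)
      (by exact ⟨s, by simp [hpdef, Nat.not_succ_le_self]⟩)
    obtain ⟨t, htP, hteq⟩ := hkP
    by_cases hkn : k ≤ n
    · simp [hpdef, hkn] at hteq
    · simp only [hpdef, if_neg hkn] at hteq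
      exact Sum.inr_injective hteq ▸ htP
end

section
/- Circularity-style invariant proof (abstract form of Corollary on invariants): let (S, →) be a transition system and S₀, P ⊆ S with S₀ ⊆ P. Using the stop-transformation (S', →', T', [·]) of the previous context, if P →⊛ [P] holds in (S', →') relative to T', then Reach(S₀) ⊆ P in (S, →). -/
theorem stmt_11 {S : Type*} (r : S → S → Prop) (S₀ P : Set S)
    (h₀ : S₀ ⊆ P)
    (h : RLHolds (stepStop r) (Set.range Sum.inr) (Sum.inl '' P) (Sum.inr '' P)) :
    Reach r S₀ ⊆ P := by
  rintro s ⟨s₀, hs₀, hrt⟩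
  induction hrt with
  | refl => exact h₀ hs₀
  | tail hab hbc ih =>
    rename_i b c
    -- use path inl b → inl c → inr c
    have step : ∀ x y : S, x ∈ P → r x y → y ∈ P := by
      intro x y hx hxy
      set p : ℕ → S ⊕ S := fun k => if k = 0 then Sum.inl x else if k = 1 then Sum.inl y else Sum.inr y with hp
      have hpath : IsPath (stepStop r) p 2 := by
        intro k hk
        interval_cases k <;> simp [hp, stepStop, hxy]
      obtain ⟨k, hk2, hkm⟩ := h p 2 hpath (by simp [hp]; exact hx) (by simp [hp])
      interval_cases k <;> simp [hp] at hkm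
      exact hkm
    exact step b c ih hbc
end

section
/- Semantics of pattern conjunction via complete unifier sets: with the pattern semantics ⟦u ∣ φ⟧ = { a | ∃ρ, a = ⟦u⟧ρ ∧ M,ρ ⊨ φρ } over disjoint-variable patterns (u ∣ φ) and (v ∣ ψ), and given a set U of substitutions that is a complete set of unifiers of u and v with respect to M (i.e., ⟦u⟧ρ = ⟦v⟧ρ for a ground assignment ρ iff ρ factors through some α ∈ U), we have ⟦u ∣ φ⟧ ∩ ⟦v ∣ ψ⟧ = ⋃_{α ∈ U} ⟦uα ∣ (φ ∧ ψ)α⟧. -/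
theorem stmt_15 {X Term M : Type*}
    (eval : Term → (X → M) → M)
    (tsubst : Term → (X → Term) → Term)
    (hcomp : ∀ (t : Term) (α : X → Term) (ρ : X → M),
      eval (tsubst t α) ρ = eval t (fun x => eval (α x) ρ))
    (u v : Term) (Φ Ψ : (X → M) → Prop)
    -- disjointness of the variables of (u ∣ Φ) and (v ∣ Ψ)
    (hdisj : ∀ ρ ρ' : X → M, ∃ ρ'' : X → M,
      eval u ρ'' = eval u ρ ∧ (Φ ρ'' ↔ Φ ρ) ∧
      eval v ρ'' = eval v ρ' ∧ (Ψ ρ'' ↔ Ψ ρ'))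
    (U : Set (X → Term))
    -- `U` is a complete set of unifiers of `u` and `v` w.r.t. `M`:
    -- a ground assignment unifies `u` and `v` iff it factors through some `α ∈ U`
    (hU : ∀ ρ : X → M, eval u ρ = eval v ρ ↔
      ∃ α ∈ U, ∃ τ : X → M, ∀ x, ρ x = eval (α x) τ) :
    {a : M | ∃ ρ : X → M, a = eval u ρ ∧ Φ ρ} ∩
      {a : M | ∃ ρ : X → M, a = eval v ρ ∧ Ψ ρ} =
    ⋃ α ∈ U, {a : M | ∃ ρ : X → M, a = eval (tsubst u α) ρ ∧
      (Φ (fun x => eval (α x) ρ) ∧ Ψ (fun x => eval (α x) ρ))} := by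
  ext a
  simp only [Set.mem_inter_iff, Set.mem_setOf_eq, Set.mem_iUnion]
  constructor
  · rintro ⟨⟨ρ₁, rfl, hΦ⟩, ρ₂, ha2, hΨ⟩
    obtain ⟨ρ, hu, hΦ', hv, hΨ'⟩ := hdisj ρ₁ ρ₂
    have huv : eval u ρ = eval v ρ := by rw [hu, hv, ha2]
    obtain ⟨α, hα, τ, hτ⟩ := (hU ρ).mp huv
    have hρ : ρ = fun x => eval (α x) τ := funext hτ
    refine ⟨α, hα, τ, ?_, ?_, ?_⟩
    · rw [hcomp, ← hρ, hu]
    · rw [← hρ]; exact hΦ'.mpr hΦ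
    · rw [← hρ]; exact hΨ'.mpr hΨ
  · rintro ⟨α, hα, τ, rfl, hΦ, hΨ⟩
    set ρ := fun x => eval (α x) τ with hρ
    have huv : eval u ρ = eval v ρ :=
      (hU ρ).mpr ⟨α, hα, τ, fun x => rfl⟩
    rw [hcomp]
    exact ⟨⟨ρ, rfl, hΦ⟩, ρ, huv, hΨ⟩
end
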